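/- Let R, L, G, C, ℓ be positive reals, T > 0, and let v, i : [0, T] × [0, ℓ] → ℝ be continuously differentiable functions satisfying the Telegrapher's equations C ∂_t v + ∂_x i + G v = 0 and L ∂_t i + ∂_x v + R i = 0 on [0, T] × [0, ℓ]. Then the Lyapunov function V(t) = (1/2) ∫₀^ℓ (C v(t,x)² + L i(t,x)²) dx is differentiable and satisfies the energy identity V′(t) = −(v(t, ℓ) i(t, ℓ) − v(t, 0) i(t, 0)) − ∫₀^ℓ (G v(t,x)² + R i(t,x)²) dx for every t ∈ [0, T]. -/

import Mathlib

open MeasureTheory intervalIntegral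

lemma aux_hasDerivAt_fst (f : ℝ × ℝ → ℝ) (hf : ContDiff ℝ 1 f) (t x : ℝ) :
    HasDerivAt (fun τ => f (τ, x)) (fderiv ℝ f (t, x) (1, 0)) t := by
  have h1 : HasDerivAt (fun τ : ℝ => (τ, x)) ((1 : ℝ), (0 : ℝ)) t :=
    (hasDerivAt_id t).prodMk (hasDerivAt_const t x)
  exact ((hf.differentiable one_ne_zero (t, x)).hasFDerivAt).comp_hasDerivAt t h1

lemma aux_hasDerivAt_snd (f : ℝ × ℝ → ℝ) (hf : ContDiff ℝ 1 f) (t x : ℝ) :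
    HasDerivAt (fun y => f (t, y)) (fderiv ℝ f (t, x) (0, 1)) x := by
  have h1 : HasDerivAt (fun y : ℝ => (t, y)) ((0 : ℝ), (1 : ℝ)) x :=
    (hasDerivAt_const x t).prodMk (hasDerivAt_id x)
  exact ((hf.differentiable one_ne_zero (t, x)).hasFDerivAt).comp_hasDerivAt x h1

lemma aux_cont_fderiv (f : ℝ × ℝ → ℝ) (hf : ContDiff ℝ 1 f) (w : ℝ × ℝ) :
    Continuous (fun p : ℝ × ℝ => fderiv ℝ f p w) :=
  (hf.continuous_fderiv one_ne_zero).clm_apply continuous_const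

theorem telegrapher_energy_identity (R L G C ℓ T : ℝ)
    (hR : 0 < R) (hL : 0 < L) (hG : 0 < G) (hC : 0 < C) (hℓ : 0 < ℓ) (hT : 0 < T)
    (v i : ℝ → ℝ → ℝ)
    (hv : ContDiff ℝ 1 (fun p : ℝ × ℝ => v p.1 p.2))
    (hi : ContDiff ℝ 1 (fun p : ℝ × ℝ => i p.1 p.2))
    (hpde₁ : ∀ t ∈ Set.Icc 0 T, ∀ x ∈ Set.Icc 0 ℓ,
      C * deriv (fun τ => v τ x) t + deriv (fun y => i t y) x + G * v t x = 0)
    (hpde₂ : ∀ t ∈ Set.Icc 0 T, ∀ x ∈ Set.Icc 0 ℓ,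
      L * deriv (fun τ => i τ x) t + deriv (fun y => v t y) x + R * i t x = 0) :
    ∀ t ∈ Set.Icc 0 T,
      HasDerivWithinAt
        (fun τ => (1 / 2) * ∫ x in (0:ℝ)..ℓ, (C * v τ x ^ 2 + L * i τ x ^ 2))
        (-(v t ℓ * i t ℓ - v t 0 * i t 0) -
          ∫ x in (0:ℝ)..ℓ, (G * v t x ^ 2 + R * i t x ^ 2))
        (Set.Icc 0 T) t := by
  intro t ht
  -- derivative fields
  set vt : ℝ → ℝ → ℝ := fun τ x => fderiv ℝ (fun p : ℝ × ℝ => v p.1 p.2) (τ, x) (1, 0) with hvt_def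
  set it : ℝ → ℝ → ℝ := fun τ x => fderiv ℝ (fun p : ℝ × ℝ => i p.1 p.2) (τ, x) (1, 0) with hit_def
  set vx : ℝ → ℝ → ℝ := fun τ x => fderiv ℝ (fun p : ℝ × ℝ => v p.1 p.2) (τ, x) (0, 1) with hvx_def
  set ix : ℝ → ℝ → ℝ := fun τ x => fderiv ℝ (fun p : ℝ × ℝ => i p.1 p.2) (τ, x) (0, 1) with hix_def
  have hvC : Continuous (fun p : ℝ × ℝ => v p.1 p.2) := hv.continuous
  have hiC : Continuous (fun p : ℝ × ℝ => i p.1 p.2) := hi.continuous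
  have hvtD : ∀ τ x, HasDerivAt (fun s => v s x) (vt τ x) τ := fun τ x =>
    aux_hasDerivAt_fst _ hv τ x
  have hitD : ∀ τ x, HasDerivAt (fun s => i s x) (it τ x) τ := fun τ x =>
    aux_hasDerivAt_fst _ hi τ x
  have hvxD : ∀ τ x, HasDerivAt (fun y => v τ y) (vx τ x) x := fun τ x =>
    aux_hasDerivAt_snd _ hv τ x
  have hixD : ∀ τ x, HasDerivAt (fun y => i τ y) (ix τ x) x := fun τ x =>
    aux_hasDerivAt_snd _ hi τ x
  have hvtC : Continuous (fun p : ℝ × ℝ => vt p.1 p.2) := by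
    have := aux_cont_fderiv _ hv ((1 : ℝ), (0 : ℝ)); simpa [hvt_def] using this
  have hitC : Continuous (fun p : ℝ × ℝ => it p.1 p.2) := by
    have := aux_cont_fderiv _ hi ((1 : ℝ), (0 : ℝ)); simpa [hit_def] using this
  -- PDE in terms of the fields
  have pde1 : ∀ x ∈ Set.Icc 0 ℓ, C * vt t x + ix t x + G * v t x = 0 := by
    intro x hx
    have h := hpde₁ t ht x hx
    rwa [(hvtD t x).deriv, (hixD t x).deriv] at h
  have pde2 : ∀ x ∈ Set.Icc 0 ℓ, L * it t x + vx t x + R * i t x = 0 := by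
    intro x hx
    have h := hpde₂ t ht x hx
    rwa [(hitD t x).deriv, (hvxD t x).deriv] at h
  -- the integrand and its t-derivative
  set F : ℝ → ℝ → ℝ := fun τ x => C * v τ x ^ 2 + L * i τ x ^ 2 with hF_def
  set F' : ℝ → ℝ → ℝ := fun τ x =>
    C * (2 * v τ x * vt τ x) + L * (2 * i τ x * it τ x) with hF'_def
  have hFD : ∀ τ x, HasDerivAt (fun s => F s x) (F' τ x) τ := by
    intro τ x
    have h1 := (((hvtD τ x).pow 2).const_mul C).add (((hitD τ x).pow 2).const_mul L)
    refine h1.congr_deriv ?_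
    simp only [hF'_def]
    norm_num
  have hF'C : Continuous (fun p : ℝ × ℝ => F' p.1 p.2) := by
    apply Continuous.add
    · exact continuous_const.mul ((continuous_const.mul hvC).mul hvtC)
    · exact continuous_const.mul ((continuous_const.mul hiC).mul hitC)
  -- bound on a compact neighborhood
  obtain ⟨M, hM⟩ : ∃ M, ∀ p ∈ (Metric.closedBall t 1) ×ˢ Set.uIcc (0:ℝ) ℓ,
      ‖F' p.1 p.2‖ ≤ M := by
    have hK : IsCompact ((Metric.closedBall t 1) ×ˢ Set.uIcc (0:ℝ) ℓ) :=
      (isCompact_closedBall t 1).prod isCompact_uIcc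
    exact hK.exists_bound_of_continuousOn hF'C.continuousOn
  -- differentiation under the integral sign
  have hFcontx : ∀ τ, Continuous (fun x => F τ x) := by
    intro τ
    have h3 : Continuous (fun x => v τ x) := hvC.comp (continuous_const.prodMk continuous_id)
    have h4 : Continuous (fun x => i τ x) := hiC.comp (continuous_const.prodMk continuous_id)
    exact (continuous_const.mul (h3.pow 2)).add (continuous_const.mul (h4.pow 2))
  have hmain : HasDerivAt (fun τ => ∫ x in (0:ℝ)..ℓ, F τ x)
      (∫ x in (0:ℝ)..ℓ, F' t x) t := by
    have h := intervalIntegral.hasDerivAt_integral_of_dominated_loc_of_deriv_le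
      (F := F) (F' := F') (x₀ := t) (a := (0:ℝ)) (b := ℓ) (μ := volume)
      (bound := fun _ => M) (s := Metric.ball t 1) (Metric.ball_mem_nhds t one_pos)
      (Filter.Eventually.of_forall (fun τ => (hFcontx τ).aestronglyMeasurable))
      ((hFcontx t).intervalIntegrable 0 ℓ)
      (Continuous.aestronglyMeasurable
        (hF'C.comp (continuous_const.prodMk continuous_id) : Continuous (fun x => F' t x)))
      (Filter.Eventually.of_forall (fun x hx τ hτ =>
        hM (τ, x) ⟨Metric.ball_subset_closedBall hτ, Set.uIoc_subset_uIcc hx⟩))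
      intervalIntegrable_const
      (Filter.Eventually.of_forall (fun x _ τ _ => hFD τ x))
    exact h.2
  have hV : HasDerivAt (fun τ => (1 / 2) * ∫ x in (0:ℝ)..ℓ, F τ x)
      ((1 / 2) * ∫ x in (0:ℝ)..ℓ, F' t x) t := hmain.const_mul (1 / 2)
  -- FTC for the boundary term
  have hpC : Continuous (fun x => vx t x * i t x + v t x * ix t x) := by
    have h1 : Continuous (fun x => vx t x) :=
      (aux_cont_fderiv _ hv ((0:ℝ),(1:ℝ))).comp (continuous_const.prodMk continuous_id)
    have h2 : Continuous (fun x => ix t x) :=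
      (aux_cont_fderiv _ hi ((0:ℝ),(1:ℝ))).comp (continuous_const.prodMk continuous_id)
    have h3 : Continuous (fun x => v t x) := hvC.comp (continuous_const.prodMk continuous_id)
    have h4 : Continuous (fun x => i t x) := hiC.comp (continuous_const.prodMk continuous_id)
    exact (h1.mul h4).add (h3.mul h2)
  have hFTC : ∫ x in (0:ℝ)..ℓ, (vx t x * i t x + v t x * ix t x)
      = v t ℓ * i t ℓ - v t 0 * i t 0 := by
    apply intervalIntegral.integral_eq_sub_of_hasDerivAt
    · intro x hx
      exact (hvxD t x).mul (hixD t x)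
    · exact hpC.intervalIntegrable 0 ℓ
  -- integrability of the pieces
  have hQC : Continuous (fun x => G * v t x ^ 2 + R * i t x ^ 2) := by
    have h3 : Continuous (fun x => v t x) := hvC.comp (continuous_const.prodMk continuous_id)
    have h4 : Continuous (fun x => i t x) := hiC.comp (continuous_const.prodMk continuous_id)
    exact (continuous_const.mul (h3.pow 2)).add (continuous_const.mul (h4.pow 2))
  -- rewrite the integrand of F' t via the PDE
  have hcongr : ∫ x in (0:ℝ)..ℓ, F' t x
      = ∫ x in (0:ℝ)..ℓ, ((-2) * ((vx t x * i t x + v t x * ix t x)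
          + (G * v t x ^ 2 + R * i t x ^ 2))) := by
    apply intervalIntegral.integral_congr
    intro x hx
    have hx' : x ∈ Set.Icc 0 ℓ := by
      rwa [Set.uIcc_of_le hℓ.le] at hx
    have h1 := pde1 x hx'
    have h2 := pde2 x hx'
    simp only [hF'_def]
    linear_combination (2 * v t x) * h1 + (2 * i t x) * h2
  have hsplit : ∫ x in (0:ℝ)..ℓ, ((-2) * ((vx t x * i t x + v t x * ix t x)
        + (G * v t x ^ 2 + R * i t x ^ 2)))
      = (-2) * ((v t ℓ * i t ℓ - v t 0 * i t 0)
        + ∫ x in (0:ℝ)..ℓ, (G * v t x ^ 2 + R * i t x ^ 2)) := by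
    rw [intervalIntegral.integral_const_mul,
      intervalIntegral.integral_add (hpC.intervalIntegrable 0 ℓ) (hQC.intervalIntegrable 0 ℓ),
      hFTC]
  have hfinal : (1 / 2) * ∫ x in (0:ℝ)..ℓ, F' t x
      = -(v t ℓ * i t ℓ - v t 0 * i t 0) -
        ∫ x in (0:ℝ)..ℓ, (G * v t x ^ 2 + R * i t x ^ 2) := by
    rw [hcongr, hsplit]; ring
  rw [hfinal] at hV
  exact hV.hasDerivWithinAt
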